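/- Shearer's inequality: Let Z_1, …, Z_n be discrete random variables and let I be a collection of subsets of {1,…,n} such that every index i ∈ {1,…,n} belongs to at least k members of I. Then Ent(Z_1,…,Z_n) ≤ (1/k)·Σ_{I ∈ I} Ent((Z_i)_{i∈I}). -/

import Mathlib

open Finset

/-- The probability that the discrete random variable `X` (on the finite sample space `Ω`
with probability mass function `p`) takes the value `x`. -/
noncomputable def pr {Ω α : Type*} [Fintype Ω] [DecidableEq α]
    (p : Ω → ℝ) (X : Ω → α) (x : α) : ℝ :=
  ∑ ω ∈ Finset.univ.filter fun ω => X ω = x, p ω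

/-- The Shannon entropy of a discrete random variable `X`. -/
noncomputable def ent {Ω α : Type*} [Fintype Ω] [DecidableEq α]
    (p : Ω → ℝ) (X : Ω → α) : ℝ :=
  -∑ x ∈ Finset.univ.image X, pr p X x * Real.log (pr p X x)

section Aux

variable {Ω α β γ : Type*} [Fintype Ω] [DecidableEq α] [DecidableEq β] (p : Ω → ℝ)

lemma pr_nonneg (hp0 : ∀ ω, 0 ≤ p ω) (X : Ω → α) (x : α) : 0 ≤ pr p X x :=
  Finset.sum_nonneg fun ω _ => hp0 ω

lemma pr_mono (hp0 : ∀ ω, 0 ≤ p ω) {X : Ω → α} {Y : Ω → β} {x : α} {y : β}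
    (h : ∀ ω, X ω = x → Y ω = y) : pr p X x ≤ pr p Y y := by
  apply Finset.sum_le_sum_of_subset_of_nonneg
  · intro ω hω
    simp only [Finset.mem_filter, Finset.mem_univ, true_and] at hω ⊢
    exact h ω hω
  · intro ω _ _; exact hp0 ω

lemma p_le_pr (hp0 : ∀ ω, 0 ≤ p ω) (X : Ω → α) (ω : Ω) : p ω ≤ pr p X (X ω) := by
  apply Finset.single_le_sum (fun ω' _ => hp0 ω')
  simp

lemma sum_fiber (X : Ω → α) (G : α → ℝ) :
    ∑ x ∈ Finset.univ.image X, pr p X x * G x = ∑ ω, p ω * G (X ω) := by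
  rw [← Finset.sum_fiberwise_of_maps_to (fun ω _ => Finset.mem_image_of_mem X (mem_univ ω))
    (fun ω => p ω * G (X ω))]
  refine Finset.sum_congr rfl fun x hx => ?_
  rw [pr, Finset.sum_mul]
  refine Finset.sum_congr rfl fun ω hω => ?_
  rw [(Finset.mem_filter.1 hω).2]

lemma sum_pr (hp1 : ∑ ω, p ω = 1) (X : Ω → α) :
    ∑ x ∈ Finset.univ.image X, pr p X x = 1 := by
  have := sum_fiber p X (fun _ => 1)
  simpa [hp1] using this

lemma ent_eq (X : Ω → α) : ent p X = -∑ ω, p ω * Real.log (pr p X (X ω)) := by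
  rw [ent, sum_fiber p X (fun x => Real.log (pr p X x))]

lemma ent_mono (hp0 : ∀ ω, 0 ≤ p ω) {X : Ω → α} {Y : Ω → β}
    (h : ∀ ω ω', X ω = X ω' → Y ω = Y ω') : ent p Y ≤ ent p X := by
  rw [ent_eq, ent_eq, neg_le_neg_iff]
  refine Finset.sum_le_sum fun ω _ => ?_
  rcases eq_or_lt_of_le (hp0 ω) with h0 | h0
  · rw [← h0]; simp
  · have h1 : p ω ≤ pr p X (X ω) := p_le_pr p hp0 X ω
    have h2 : pr p X (X ω) ≤ pr p Y (Y ω) := pr_mono p hp0 fun ω' hω' => h ω' ω hω'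
    exact mul_le_mul_of_nonneg_left (Real.log_le_log (lt_of_lt_of_le h0 h1) h2) (le_of_lt h0)

lemma ent_congr (hp0 : ∀ ω, 0 ≤ p ω) {X : Ω → α} {Y : Ω → β}
    (h1 : ∀ ω ω', X ω = X ω' → Y ω = Y ω')
    (h2 : ∀ ω ω', Y ω = Y ω' → X ω = X ω') : ent p X = ent p Y :=
  le_antisymm (ent_mono p hp0 h2) (ent_mono p hp0 h1)

lemma ent_const (hp1 : ∑ ω, p ω = 1) (c : α) : ent p (fun _ => c) = 0 := by
  have hne : (Finset.univ : Finset Ω).Nonempty := by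
    by_contra h
    rw [Finset.not_nonempty_iff_eq_empty] at h
    rw [h, Finset.sum_empty] at hp1
    norm_num at hp1
  have himg : (Finset.univ.image fun _ : Ω => c) = {c} := Finset.image_const hne c
  have hpr : pr p (fun _ : Ω => c) c = 1 := by
    rw [pr]; simpa using hp1
  rw [ent, himg, Finset.sum_singleton, hpr]
  simp

lemma pr_marginal (X : Ω → α) (Y : Ω → β) (y : β) :
    ∑ x ∈ Finset.univ.image X, pr p (fun ω => (X ω, Y ω)) (x, y) = pr p Y y := by
  have key : ∀ x, pr p (fun ω => (X ω, Y ω)) (x, y)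
      = ∑ ω ∈ (Finset.univ.filter fun ω => Y ω = y).filter (fun ω => X ω = x), p ω := by
    intro x
    rw [pr]
    congr 1
    ext ω
    simp [Prod.ext_iff, and_comm]
  have h2 : ∑ x ∈ (Finset.univ.filter fun ω => Y ω = y).image X,
      pr p (fun ω => (X ω, Y ω)) (x, y) = pr p Y y := by
    rw [pr, ← Finset.sum_fiberwise_of_maps_to
      (fun ω hω => Finset.mem_image_of_mem X hω) p]
    exact Finset.sum_congr rfl fun x _ => key x
  rw [← h2]
  symm
  apply Finset.sum_subset
  · exact Finset.image_subset_image (Finset.subset_univ _)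
  · intro x hx hnx
    rw [key]
    apply Finset.sum_eq_zero
    intro ω hω
    exfalso
    simp only [Finset.mem_filter, Finset.mem_univ, true_and] at hω
    exact hnx (Finset.mem_image.2 ⟨ω, Finset.mem_filter.2 ⟨mem_univ ω, hω.1⟩, hω.2⟩)

lemma ent_submod (hp0 : ∀ ω, 0 ≤ p ω) (hp1 : ∑ ω, p ω = 1)
    {β₁ β₂ β₃ : Type*} [DecidableEq β₁] [DecidableEq β₂] [DecidableEq β₃]
    (X : Ω → β₁) (Y : Ω → β₂) (W : Ω → β₃) :
    ent p (fun ω => (X ω, Y ω, W ω)) + ent p Y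
      ≤ ent p (fun ω => (X ω, Y ω)) + ent p (fun ω => (Y ω, W ω)) := by
  classical
  set XYW := fun ω => (X ω, Y ω, W ω) with hXYW
  set XY := fun ω => (X ω, Y ω) with hXY
  set YW := fun ω => (Y ω, W ω) with hYW
  -- F v = pr_XY (v.1, v.2.1) * pr_YW v.2 / pr_Y v.2.1
  set F : β₁ × β₂ × β₃ → ℝ :=
    fun v => pr p XY (v.1, v.2.1) * pr p YW v.2 / pr p Y v.2.1 with hF
  have hFnn : ∀ v, 0 ≤ F v := fun v =>
    div_nonneg (mul_nonneg (pr_nonneg p hp0 _ _) (pr_nonneg p hp0 _ _)) (pr_nonneg p hp0 _ _)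
  -- Step 2 : ∑ ω, p ω * (F (XYW ω) / pr p XYW (XYW ω)) ≤ 1
  have step2 : ∑ ω, p ω * (F (XYW ω) / pr p XYW (XYW ω)) ≤ 1 := by
    rw [← sum_fiber p XYW (fun v => F v / pr p XYW v)]
    have t1 : ∑ v ∈ Finset.univ.image XYW, pr p XYW v * (F v / pr p XYW v)
        ≤ ∑ v ∈ Finset.univ.image XYW, F v := by
      refine Finset.sum_le_sum fun v _ => ?_
      rcases eq_or_ne (pr p XYW v) 0 with h | h
      · rw [h]; simpa using hFnn v
      · rw [mul_div_cancel₀ _ h]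
    have t2 : ∑ v ∈ Finset.univ.image XYW, F v
        ≤ ∑ v ∈ (Finset.univ.image X) ×ˢ (Finset.univ.image YW), F v := by
      apply Finset.sum_le_sum_of_subset_of_nonneg
      · intro v hv
        obtain ⟨ω, _, rfl⟩ := Finset.mem_image.1 hv
        exact Finset.mem_product.2 ⟨Finset.mem_image_of_mem X (mem_univ ω),
          Finset.mem_image_of_mem YW (mem_univ ω)⟩
      · intro v _ _; exact hFnn v
    have t3 : ∑ v ∈ (Finset.univ.image X) ×ˢ (Finset.univ.image YW), F v ≤ 1 := by
      rw [Finset.sum_product_right]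
      have inner : ∀ yw ∈ Finset.univ.image YW,
          ∑ x ∈ Finset.univ.image X, F (x, yw) ≤ pr p YW yw := by
        intro yw _
        have : ∑ x ∈ Finset.univ.image X, F (x, yw)
            = (∑ x ∈ Finset.univ.image X, pr p XY (x, yw.1)) * (pr p YW yw / pr p Y yw.1) := by
          rw [Finset.sum_mul]
          refine Finset.sum_congr rfl fun x _ => ?_
          rw [hF]
          ring
        rw [this, pr_marginal]
        rcases eq_or_ne (pr p Y yw.1) 0 with h | h
        · rw [h]
          simpa using pr_nonneg p hp0 YW yw
        · rw [mul_div_cancel₀ _ h]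
      calc ∑ yw ∈ Finset.univ.image YW, ∑ x ∈ Finset.univ.image X, F (x, yw)
          ≤ ∑ yw ∈ Finset.univ.image YW, pr p YW yw := Finset.sum_le_sum inner
        _ = 1 := sum_pr p hp1 YW
    linarith
  -- Step 1 : termwise log bound
  have main : ∑ ω, p ω * (Real.log (pr p XY (XY ω)) + Real.log (pr p YW (YW ω))
      - Real.log (pr p XYW (XYW ω)) - Real.log (pr p Y (Y ω)))
      ≤ ∑ ω, (p ω * (F (XYW ω) / pr p XYW (XYW ω)) - p ω) := by
    refine Finset.sum_le_sum fun ω _ => ?_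
    rcases eq_or_lt_of_le (hp0 ω) with h0 | h0
    · rw [← h0]; simp
    · have ha : 0 < pr p XYW (XYW ω) := lt_of_lt_of_le h0 (p_le_pr p hp0 XYW ω)
      have hb : 0 < pr p XY (XY ω) := lt_of_lt_of_le h0 (p_le_pr p hp0 XY ω)
      have hc : 0 < pr p YW (YW ω) := lt_of_lt_of_le h0 (p_le_pr p hp0 YW ω)
      have hd : 0 < pr p Y (Y ω) := lt_of_lt_of_le h0 (p_le_pr p hp0 Y ω)
      have hFω : F (XYW ω) = pr p XY (XY ω) * pr p YW (YW ω) / pr p Y (Y ω) := rfl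
      have hratio : 0 < pr p XY (XY ω) * pr p YW (YW ω) / (pr p XYW (XYW ω) * pr p Y (Y ω)) :=
        div_pos (mul_pos hb hc) (mul_pos ha hd)
      have hlog := Real.log_le_sub_one_of_pos hratio
      have hexp : Real.log (pr p XY (XY ω) * pr p YW (YW ω) / (pr p XYW (XYW ω) * pr p Y (Y ω)))
          = Real.log (pr p XY (XY ω)) + Real.log (pr p YW (YW ω))
            - Real.log (pr p XYW (XYW ω)) - Real.log (pr p Y (Y ω)) := by
        rw [Real.log_div (by positivity) (by positivity), Real.log_mul (ne_of_gt hb) (ne_of_gt hc),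
          Real.log_mul (ne_of_gt ha) (ne_of_gt hd)]
        ring
      have heq : F (XYW ω) / pr p XYW (XYW ω)
          = pr p XY (XY ω) * pr p YW (YW ω) / (pr p XYW (XYW ω) * pr p Y (Y ω)) := by
        rw [hFω]; field_simp
      rw [heq]
      rw [hexp] at hlog
      nlinarith [mul_le_mul_of_nonneg_left hlog (le_of_lt h0)]
  have hsum : ∑ ω, (p ω * (F (XYW ω) / pr p XYW (XYW ω)) - p ω) ≤ 0 := by
    rw [Finset.sum_sub_distrib, hp1]
    linarith
  have final : ∑ ω, p ω * (Real.log (pr p XY (XY ω)) + Real.log (pr p YW (YW ω))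
      - Real.log (pr p XYW (XYW ω)) - Real.log (pr p Y (Y ω))) ≤ 0 := le_trans main hsum
  rw [ent_eq p XYW, ent_eq p Y, ent_eq p XY, ent_eq p YW]
  have expand : ∀ ω, p ω * (Real.log (pr p XY (XY ω)) + Real.log (pr p YW (YW ω))
      - Real.log (pr p XYW (XYW ω)) - Real.log (pr p Y (Y ω)))
      = p ω * Real.log (pr p XY (XY ω)) + p ω * Real.log (pr p YW (YW ω))
      - p ω * Real.log (pr p XYW (XYW ω)) - p ω * Real.log (pr p Y (Y ω)) := fun ω => by ring
  simp only [expand, Finset.sum_sub_distrib, Finset.sum_add_distrib] at final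
  linarith

end Aux

section OMLemmas

variable {Ω α : Type*} [Fintype Ω] [DecidableEq α] {n : ℕ}

/-- Tuple of the variables indexed by `T`, padded with `none` outside `T`. -/
def OM (Z : Fin n → Ω → α) (T : Finset (Fin n)) (ω : Ω) : Fin n → Option α :=
  fun i => if i ∈ T then some (Z i ω) else none

lemma OM_subset (Z : Fin n → Ω → α) {A B : Finset (Fin n)} (hAB : A ⊆ B) (ω : Ω) :
    OM Z A ω = fun j => if j ∈ A then OM Z B ω j else none := by
  funext j
  simp only [OM]
  by_cases h : j ∈ A
  · simp [h, hAB h]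
  · simp [h]

lemma OM_det (Z : Fin n → Ω → α) {A B : Finset (Fin n)} (hAB : A ⊆ B) {ω ω' : Ω}
    (h : OM Z B ω = OM Z B ω') : OM Z A ω = OM Z A ω' := by
  rw [OM_subset Z hAB ω, OM_subset Z hAB ω', h]

lemma OM_insert_det (Z : Fin n → Ω → α) (i : Fin n) (T : Finset (Fin n)) {ω ω' : Ω}
    (hz : Z i ω = Z i ω') (h : OM Z T ω = OM Z T ω') :
    OM Z (insert i T) ω = OM Z (insert i T) ω' := by
  funext j
  by_cases hji : j = i
  · subst hji; simp [OM, hz]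
  · have := congrFun h j
    simp only [OM, Finset.mem_insert] at this ⊢
    by_cases hjT : j ∈ T
    · simpa [hjT, hji] using this
    · simp [hjT, hji]

lemma OM_insert_Z (Z : Fin n → Ω → α) (i : Fin n) (T : Finset (Fin n)) {ω ω' : Ω}
    (h : OM Z (insert i T) ω = OM Z (insert i T) ω') : Z i ω = Z i ω' := by
  have := congrFun h i
  simp only [OM, Finset.mem_insert_self, if_true] at this
  exact Option.some.inj this

/-- Shannon entropy of the `T`-marginal tuple. -/
noncomputable def hOM (p : Ω → ℝ) (Z : Fin n → Ω → α) (T : Finset (Fin n)) : ℝ :=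
  ent p (OM Z T)

lemma hOM_mono (p : Ω → ℝ) (hp0 : ∀ ω, 0 ≤ p ω) (Z : Fin n → Ω → α)
    {A B : Finset (Fin n)} (hAB : A ⊆ B) : hOM p Z A ≤ hOM p Z B :=
  ent_mono p hp0 fun ω ω' h => OM_det Z hAB h

lemma hOM_empty (p : Ω → ℝ) (hp1 : ∑ ω, p ω = 1) (Z : Fin n → Ω → α) :
    hOM p Z ∅ = 0 := by
  have : OM Z ∅ = fun _ : Ω => (fun _ : Fin n => (none : Option α)) := by
    funext ω j; simp [OM]
  rw [hOM, this, ent_const p hp1]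

lemma hOM_key (p : Ω → ℝ) (hp0 : ∀ ω, 0 ≤ p ω) (hp1 : ∑ ω, p ω = 1)
    (Z : Fin n → Ω → α) {A B : Finset (Fin n)} (hAB : A ⊆ B) (i : Fin n) :
    hOM p Z (insert i B) + hOM p Z A ≤ hOM p Z (insert i A) + hOM p Z B := by
  classical
  have h := ent_submod p hp0 hp1 (fun ω => Z i ω) (OM Z A) (OM Z B)
  have hAiB : A ⊆ insert i B := hAB.trans (Finset.subset_insert i B)
  have hBiB : B ⊆ insert i B := Finset.subset_insert i B
  have hAiA : A ⊆ insert i A := Finset.subset_insert i A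
  have e1 : ent p (fun ω => (Z i ω, OM Z A ω, OM Z B ω)) = hOM p Z (insert i B) := by
    refine ent_congr p hp0 (fun ω ω' hh => ?_) (fun ω ω' hh => ?_)
    · have h1 := (Prod.ext_iff.1 hh).1
      have h23 := (Prod.ext_iff.1 hh).2
      exact OM_insert_det Z i B h1 (Prod.ext_iff.1 h23).2
    · have hz := OM_insert_Z Z i B hh
      have hB := OM_det Z hBiB hh
      have hA := OM_det Z hAiB hh
      simp [hz, hA, hB]
  have e2 : ent p (fun ω => (Z i ω, OM Z A ω)) = hOM p Z (insert i A) := by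
    refine ent_congr p hp0 (fun ω ω' hh => ?_) (fun ω ω' hh => ?_)
    · have h1 := (Prod.ext_iff.1 hh).1
      have h2 := (Prod.ext_iff.1 hh).2
      exact OM_insert_det Z i A h1 h2
    · have hz := OM_insert_Z Z i A hh
      have hA := OM_det Z hAiA hh
      simp [hz, hA]
  have e3 : ent p (fun ω => (OM Z A ω, OM Z B ω)) = hOM p Z B := by
    refine ent_congr p hp0 (fun ω ω' hh => ?_) (fun ω ω' hh => ?_)
    · exact (Prod.ext_iff.1 hh).2
    · have hA := OM_det Z hAB hh
      simp [hA, hh]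
  rw [e1, e2, e3] at h
  have e4 : ent p (OM Z A) = hOM p Z A := rfl
  linarith [h]

end OMLemmas

/-- Shearer's inequality: if every index `i ∈ {1,…,n}` belongs to at least `k`
members of the collection `I` of subsets of indices, then
`Ent(Z_1,…,Z_n) ≤ (1/k) * Σ_{s ∈ I} Ent((Z_i)_{i ∈ s})`. -/
theorem shearer {Ω α : Type*} [Fintype Ω] [DecidableEq α] {n : ℕ}
    (p : Ω → ℝ) (hp0 : ∀ ω, 0 ≤ p ω) (hp1 : ∑ ω, p ω = 1)
    (Z : Fin n → Ω → α) (I : Finset (Finset (Fin n))) (k : ℕ) (hk : 0 < k)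
    (hcover : ∀ i : Fin n, k ≤ (I.filter fun s => i ∈ s).card) :
    ent p (fun ω => fun i : Fin n => Z i ω)
      ≤ (1 / (k : ℝ)) * ∑ s ∈ I, ent p (fun ω => fun i : {j // j ∈ s} => Z i.1 ω) := by
  classical
  -- prefix sets
  set pre : ℕ → Finset (Fin n) := fun m => Finset.univ.filter (fun j : Fin n => j.val < m)
    with hpre
  have pre_zero : pre 0 = ∅ := by simp [hpre]
  have pre_n : pre n = Finset.univ := by
    apply Finset.eq_univ_of_forall
    intro j; simp [hpre, j.isLt]
  have pre_succ : ∀ m (hm : m < n), pre (m + 1) = insert ⟨m, hm⟩ (pre m) := by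
    intro m hm
    ext j
    simp only [hpre, Finset.mem_filter, Finset.mem_univ, true_and, Finset.mem_insert]
    constructor
    · intro hj
      rcases Nat.lt_succ_iff_lt_or_eq.1 hj with h | h
      · exact Or.inr (by simpa using h)
      · exact Or.inl (Fin.ext h)
    · rintro (rfl | hj)
      · exact Nat.lt_succ_self m
      · exact Nat.lt_succ_of_lt (by simpa using hj)
  have mem_pre : ∀ m (j : Fin n), j ∈ pre m ↔ j.val < m := by
    intro m j; simp [hpre]
  -- entropies agree with hOM
  have lhs_eq : ent p (fun ω => fun i : Fin n => Z i ω) = hOM p Z Finset.univ := by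
    refine ent_congr p hp0 (fun ω ω' h => ?_) (fun ω ω' h => ?_)
    · funext j
      simp only [OM, Finset.mem_univ, if_true]
      rw [congrFun h j]
    · funext j
      have := congrFun h j
      simp only [OM, Finset.mem_univ, if_true] at this
      exact Option.some.inj this
  have rhs_eq : ∀ s ∈ I, ent p (fun ω => fun i : {j // j ∈ s} => Z i.1 ω) = hOM p Z s := by
    intro s _
    refine ent_congr p hp0 (fun ω ω' h => ?_) (fun ω ω' h => ?_)
    · funext j
      simp only [OM]
      by_cases hj : j ∈ s
      · simp only [hj, if_true]
        rw [congrFun h ⟨j, hj⟩]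
      · simp [hj]
    · funext j
      have := congrFun h j.1
      simp only [OM, j.2, if_true] at this
      exact Option.some.inj this
  -- telescoping for the full entropy
  have tele_full : hOM p Z Finset.univ
      = ∑ m ∈ Finset.range n, (hOM p Z (pre (m + 1)) - hOM p Z (pre m)) := by
    rw [Finset.sum_range_sub (fun m => hOM p Z (pre m)), pre_n, pre_zero,
      hOM_empty p hp1 Z, sub_zero]
  -- telescoping for each s
  have tele_s : ∀ s : Finset (Fin n), hOM p Z s
      = ∑ m ∈ Finset.range n, (hOM p Z (s ∩ pre (m + 1)) - hOM p Z (s ∩ pre m)) := by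
    intro s
    rw [Finset.sum_range_sub (fun m => hOM p Z (s ∩ pre m))]
    have h1 : s ∩ pre n = s := by rw [pre_n, Finset.inter_univ]
    have h0 : s ∩ pre 0 = ∅ := by rw [pre_zero, Finset.inter_empty]
    rw [h1, h0, hOM_empty p hp1 Z, sub_zero]
  set D : ℕ → ℝ := fun m => hOM p Z (pre (m + 1)) - hOM p Z (pre m) with hD
  set ind : Finset (Fin n) → ℕ → ℝ :=
    fun s m => if h : m < n then (if (⟨m, h⟩ : Fin n) ∈ s then D m else 0) else 0 with hind
  have diff_nonneg : ∀ m, m < n → 0 ≤ D m := by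
    intro m hm
    have hsub : pre m ⊆ pre (m + 1) := by
      intro j hj
      rw [mem_pre] at hj ⊢
      omega
    have := hOM_mono p hp0 Z hsub
    rw [hD]
    simp only []
    linarith
  have per_term : ∀ s : Finset (Fin n), ∀ m ∈ Finset.range n,
      ind s m ≤ hOM p Z (s ∩ pre (m + 1)) - hOM p Z (s ∩ pre m) := by
    intro s m hm
    have hmn : m < n := Finset.mem_range.1 hm
    set i : Fin n := ⟨m, hmn⟩ with hi
    have hind_eq : ind s m = if i ∈ s then D m else 0 := by
      rw [hind]
      simp only [hmn, dif_pos]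
      rfl
    rw [hind_eq]
    by_cases his : i ∈ s
    · simp only [his, if_true, hD]
      have hinter : s ∩ pre (m + 1) = insert i (s ∩ pre m) := by
        rw [pre_succ m hmn]
        ext j
        simp only [Finset.mem_inter, Finset.mem_insert]
        constructor
        · rintro ⟨hjs, (rfl | hj)⟩
          · exact Or.inl rfl
          · exact Or.inr ⟨hjs, hj⟩
        · rintro (rfl | ⟨hjs, hj⟩)
          · exact ⟨his, Or.inl rfl⟩
          · exact ⟨hjs, Or.inr hj⟩
      have hkey := hOM_key p hp0 hp1 Z
        (Finset.inter_subset_right : s ∩ pre m ⊆ pre m) i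
      rw [hinter, pre_succ m hmn]
      linarith [hkey]
    · have hinter : s ∩ pre (m + 1) = s ∩ pre m := by
        rw [pre_succ m hmn]
        ext j
        simp only [Finset.mem_inter, Finset.mem_insert]
        constructor
        · rintro ⟨hjs, (rfl | hj)⟩
          · exact absurd hjs his
          · exact ⟨hjs, hj⟩
        · rintro ⟨hjs, hj⟩
          exact ⟨hjs, Or.inr hj⟩
      simp only [his, if_false, hinter, sub_self, le_refl]
  have main : (k : ℝ) * hOM p Z Finset.univ ≤ ∑ s ∈ I, hOM p Z s := by
    have step : ∀ s ∈ I, ∑ m ∈ Finset.range n, ind s m ≤ hOM p Z s := by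
      intro s _
      rw [tele_s s]
      exact Finset.sum_le_sum (per_term s)
    have inner : ∀ m ∈ Finset.range n, (k : ℝ) * D m ≤ ∑ s ∈ I, ind s m := by
      intro m hm
      have hmn : m < n := Finset.mem_range.1 hm
      have hrw : ∀ s, ind s m = if (⟨m, hmn⟩ : Fin n) ∈ s then D m else 0 := by
        intro s
        rw [hind]
        simp only [hmn, dif_pos]
      simp only [hrw]
      rw [← Finset.sum_filter, Finset.sum_const, nsmul_eq_mul]
      apply mul_le_mul_of_nonneg_right _ (diff_nonneg m hmn)
      exact_mod_cast hcover ⟨m, hmn⟩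
    calc (k : ℝ) * hOM p Z Finset.univ
        = ∑ m ∈ Finset.range n, (k : ℝ) * D m := by
          rw [tele_full, Finset.mul_sum]
      _ ≤ ∑ m ∈ Finset.range n, ∑ s ∈ I, ind s m := Finset.sum_le_sum inner
      _ = ∑ s ∈ I, ∑ m ∈ Finset.range n, ind s m := Finset.sum_comm
      _ ≤ ∑ s ∈ I, hOM p Z s := Finset.sum_le_sum step
  rw [lhs_eq, Finset.sum_congr rfl rhs_eq]
  have hkpos : (0 : ℝ) < k := by exact_mod_cast hk
  rw [one_div, inv_mul_eq_div, le_div_iff₀ hkpos]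
  linarith [main]
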